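/- Fix c > 0 and let σ(u,ν) = (c sinh ν cos u, c sinh ν sin u, c cosh ν) parametrize the upper sheet ℍ²_c of x²+y²−z² = −c². Then: (i) the Jacobian Jσ(u,ν) satisfies Jσᵀ · diag(1,1,−1) · Jσ = diag(c² sinh²ν, c²), i.e. the induced Killing metric is c²(cosh²ν − 1)du² + c²dν²; and (ii) for ν ≠ 0, at (x,y,z) = σ(u,ν), with M(x,y,z) = (1/2)·((z²−y², xy, xz), (xy, z²−x², yz), (xz, yz, x²+y²)), α_u = (−y/(x²+y²), x/(x²+y²), 0) and α_ν = (0, 0, 1/(c sinh ν)), one has α_uᵀMα_u = 1/(2 sinh²ν), α_νᵀMα_ν = 1/2, α_uᵀMα_ν = 0; hence the double bracket metric is τ_db = 2(cosh²ν − 1)du² + 2dν². In particular the double bracket metric and the induced metric on ℍ²_c differ unless c² = 2. -/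

import Mathlib

open Matrix

set_option maxHeartbeats 1600000 in
/-- For `c > 0` and the parametrization
`σ(u,ν) = (c sinh ν cos u, c sinh ν sin u, c cosh ν)` of the upper sheet `ℍ²_c` of
`x²+y²−z² = −c²`: (i) `Jσᵀ·diag(1,1,−1)·Jσ = diag(c² sinh²ν, c²)` (induced Killing
metric `c²(cosh²ν−1)du² + c²dν²`); (ii) for `ν ≠ 0`, with `M` the co-metric double
bracket tensor matrix and `α_u, α_ν` the differentials of the coordinates,
`α_uᵀMα_u = 1/(2 sinh²ν)`, `α_νᵀMα_ν = 1/2`, `α_uᵀMα_ν = 0`, hence the double bracket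
metric is `2(cosh²ν−1)du² + 2dν²`; in particular it differs from the induced metric
unless `c² = 2`. -/
theorem sl2_metrics_on_two_sheeted_hyperboloid
    (c u ν : ℝ) (hc : 0 < c) (hν : ν ≠ 0) :
    let σ : (Fin 2 → ℝ) → (Fin 3 → ℝ) := fun p =>
      ![c * Real.sinh (p 1) * Real.cos (p 0),
        c * Real.sinh (p 1) * Real.sin (p 0),
        c * Real.cosh (p 1)]
    let Jσ : Matrix (Fin 3) (Fin 2) ℝ :=
      Matrix.of fun i j => fderiv ℝ σ ![u, ν] (Pi.single j 1) i
    let x : ℝ := c * Real.sinh ν * Real.cos u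
    let y : ℝ := c * Real.sinh ν * Real.sin u
    let z : ℝ := c * Real.cosh ν
    let M : Matrix (Fin 3) (Fin 3) ℝ :=
      (1 / 2 : ℝ) •
        !![z ^ 2 - y ^ 2, x * y, x * z;
           x * y, z ^ 2 - x ^ 2, y * z;
           x * z, y * z, x ^ 2 + y ^ 2]
    let αu : Fin 3 → ℝ := ![-y / (x ^ 2 + y ^ 2), x / (x ^ 2 + y ^ 2), 0]
    let αν : Fin 3 → ℝ := ![0, 0, 1 / (c * Real.sinh ν)]
    -- (i) the induced Killing metric is c²(cosh²ν − 1)du² + c²dν²: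
    (Jσᵀ * Matrix.diagonal ![(1 : ℝ), 1, -1] * Jσ =
        Matrix.diagonal ![c ^ 2 * Real.sinh ν ^ 2, c ^ 2]) ∧
    -- (ii) the restricted co-metric double bracket tensor:
    (αu ⬝ᵥ M.mulVec αu = 1 / (2 * Real.sinh ν ^ 2)) ∧
    (αν ⬝ᵥ M.mulVec αν = 1 / 2) ∧
    (αu ⬝ᵥ M.mulVec αν = 0) ∧
    -- hence the double bracket metric is 2(cosh²ν − 1)du² + 2dν²:
    ((!![αu ⬝ᵥ M.mulVec αu, αu ⬝ᵥ M.mulVec αν;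
         αu ⬝ᵥ M.mulVec αν, αν ⬝ᵥ M.mulVec αν] : Matrix (Fin 2) (Fin 2) ℝ)⁻¹ =
        Matrix.diagonal ![2 * (Real.cosh ν ^ 2 - 1), 2]) ∧
    -- in particular the two metrics differ unless c² = 2:
    ((∀ w : ℝ, Matrix.diagonal ![c ^ 2 * Real.sinh w ^ 2, c ^ 2] =
        (Matrix.diagonal ![2 * (Real.cosh w ^ 2 - 1), 2] : Matrix (Fin 2) (Fin 2) ℝ)) ↔
      c ^ 2 = 2) := by
  intro σ Jσ x y z M αu αν
  have hcne : c ≠ 0 := ne_of_gt hc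
  have hs : Real.sinh ν ≠ 0 := Real.sinh_ne_zero.mpr hν
  have hpyth : Real.cos u ^ 2 + Real.sin u ^ 2 = 1 := by
    rw [add_comm]; exact Real.sin_sq_add_cos_sq u
  have hcosh : Real.cosh ν ^ 2 = 1 + Real.sinh ν ^ 2 := by
    have h := Real.cosh_sq_sub_sinh_sq ν; linarith [h]
  -- derivative setup
  set P0 : (Fin 2 → ℝ) →L[ℝ] ℝ := ContinuousLinearMap.proj (0 : Fin 2) with hP0
  set P1 : (Fin 2 → ℝ) →L[ℝ] ℝ := ContinuousLinearMap.proj (1 : Fin 2) with hP1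
  have hp0 : HasFDerivAt (fun p : Fin 2 → ℝ => p 0) P0 ![u, ν] := hasFDerivAt_apply 0 _
  have hp1 : HasFDerivAt (fun p : Fin 2 → ℝ => p 1) P1 ![u, ν] := hasFDerivAt_apply 1 _
  have hsinh : HasFDerivAt (fun p : Fin 2 → ℝ => Real.sinh (p 1)) (Real.cosh ν • P1) ![u, ν] :=
    HasDerivAt.comp_hasFDerivAt (h₂ := Real.sinh) _ (Real.hasDerivAt_sinh ν) hp1
  have hcoshD : HasFDerivAt (fun p : Fin 2 → ℝ => Real.cosh (p 1)) (Real.sinh ν • P1) ![u, ν] :=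
    HasDerivAt.comp_hasFDerivAt (h₂ := Real.cosh) _ (Real.hasDerivAt_cosh ν) hp1
  have hcosD : HasFDerivAt (fun p : Fin 2 → ℝ => Real.cos (p 0)) ((-Real.sin u) • P0) ![u, ν] :=
    HasDerivAt.comp_hasFDerivAt (h₂ := Real.cos) _ (Real.hasDerivAt_cos u) hp0
  have hsinD : HasFDerivAt (fun p : Fin 2 → ℝ => Real.sin (p 0)) (Real.cos u • P0) ![u, ν] :=
    HasDerivAt.comp_hasFDerivAt (h₂ := Real.sin) _ (Real.hasDerivAt_sin u) hp0
  have h0 : HasFDerivAt (fun p : Fin 2 → ℝ => c * Real.sinh (p 1) * Real.cos (p 0))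
      ((c * Real.sinh ν) • ((-Real.sin u) • P0) + Real.cos u • (c • (Real.cosh ν • P1))) ![u, ν] :=
    (hsinh.const_mul c).mul hcosD
  have h1 : HasFDerivAt (fun p : Fin 2 → ℝ => c * Real.sinh (p 1) * Real.sin (p 0))
      ((c * Real.sinh ν) • (Real.cos u • P0) + Real.sin u • (c • (Real.cosh ν • P1))) ![u, ν] :=
    (hsinh.const_mul c).mul hsinD
  have h2 : HasFDerivAt (fun p : Fin 2 → ℝ => c * Real.cosh (p 1))
      (c • (Real.sinh ν • P1)) ![u, ν] :=
    hcoshD.const_mul c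
  set L : (Fin 2 → ℝ) →L[ℝ] (Fin 3 → ℝ) := ContinuousLinearMap.pi
    ![(c * Real.sinh ν) • ((-Real.sin u) • P0) + Real.cos u • (c • (Real.cosh ν • P1)),
      (c * Real.sinh ν) • (Real.cos u • P0) + Real.sin u • (c • (Real.cosh ν • P1)),
      c • (Real.sinh ν • P1)] with hL
  have hσ : HasFDerivAt σ L ![u, ν] := by
    rw [hasFDerivAt_pi']
    intro i
    fin_cases i <;>
      simp only [hL, ContinuousLinearMap.proj_pi, Matrix.cons_val_zero, Matrix.cons_val_one,
        Matrix.head_cons, Fin.mk_one, Fin.mk_zero, Matrix.cons_val_two, Matrix.tail_cons] <;>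
      first
        | exact h0
        | exact h1
        | exact h2
  have hJ : Jσ = !![-(c * Real.sinh ν * Real.sin u), c * Real.cosh ν * Real.cos u;
      c * Real.sinh ν * Real.cos u, c * Real.cosh ν * Real.sin u;
      0, c * Real.sinh ν] := by
    ext i j
    rw [show Jσ i j = fderiv ℝ σ ![u, ν] (Pi.single j 1) i from rfl, hσ.fderiv]
    fin_cases i <;> fin_cases j <;>
      simp [hL, hP0, hP1, ContinuousLinearMap.pi_apply, Pi.single_apply] <;> ring
  have part1 : Jσᵀ * Matrix.diagonal ![(1 : ℝ), 1, -1] * Jσ =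
      Matrix.diagonal ![c ^ 2 * Real.sinh ν ^ 2, c ^ 2] := by
    rw [hJ]
    ext i j
    fin_cases i <;> fin_cases j <;>
      simp [Matrix.mul_apply, Matrix.diagonal_apply, Matrix.vecHead, Matrix.vecTail,
        Matrix.transpose_apply, Fin.sum_univ_three, Fin.sum_univ_two]
    all_goals
      first
        | linear_combination (c ^ 2 * Real.sinh ν ^ 2) * hpyth
        | linear_combination (c ^ 2 * Real.cosh ν ^ 2) * hpyth + c ^ 2 * hcosh
        | ring
  clear hσ hJ h0 h1 h2 hsinh hcoshD hcosD hsinD hp0 hp1 hL hP0 hP1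
  clear L P0 P1
  -- the algebraic abbreviation
  have hA : (c * Real.sinh ν * Real.cos u) ^ 2 + (c * Real.sinh ν * Real.sin u) ^ 2
      = c ^ 2 * Real.sinh ν ^ 2 := by
    linear_combination (c ^ 2 * Real.sinh ν ^ 2) * hpyth
  have Huu : αu ⬝ᵥ M.mulVec αu = 1 / (2 * Real.sinh ν ^ 2) := by
    unfold αu M x y z
    simp [dotProduct, mulVec, Fin.sum_univ_three]
    rw [hA]
    field_simp
    ring_nf
    linear_combination (Real.cosh ν ^ 2 -
        Real.sinh ν ^ 2 * (Real.cos u ^ 2 + Real.sin u ^ 2 + 1)) * hpyth +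
      hcosh
  have Hvv : αν ⬝ᵥ M.mulVec αν = 1 / 2 := by
    unfold αν M x y z
    simp [dotProduct, mulVec, Fin.sum_univ_three]
    field_simp
    ring_nf
    linear_combination hpyth
  have Huv : αu ⬝ᵥ M.mulVec αν = 0 := by
    unfold αu αν M x y z
    simp [dotProduct, mulVec, Fin.sum_univ_three]
    rw [hA]
    field_simp
    ring_nf
  refine ⟨part1, Huu, Hvv, Huv, ?_, ?_⟩
  · rw [Huu, Hvv, Huv]
    apply Matrix.inv_eq_right_inv
    ext i j
    fin_cases i <;> fin_cases j <;>
      simp [Matrix.mul_apply, Matrix.diagonal_apply, Fin.sum_univ_two] <;>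
      field_simp <;>
      first
        | linear_combination (2 - 2 * Real.sinh ν ^ 2) * hcosh
        | linear_combination 2 * hcosh
        | linear_combination (2 * Real.sinh ν ^ 2) * hcosh
        | linear_combination hcosh
        | ring
  · constructor
    · intro h
      have e := congrFun (congrFun (h 0) 1) 1
      simpa [Matrix.diagonal_apply] using e
    · intro h2 w
      ext i j
      fin_cases i <;> fin_cases j <;> simp [Matrix.diagonal_apply]
      all_goals
        first
          | linear_combination Real.sinh w ^ 2 * h2 - 2 * (Real.cosh_sq_sub_sinh_sq w)
          | exact h2
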